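/- Let H=(X,Y,Z;𝓔) be a tripartite 3-regular 3-uniform hypergraph and let G=(S,T;E) be the bipartite graph constructed from H via the gadget construction (nodes s_x,t_x for x∈X, s_y,t_y for y∈Y, t_z for z∈Z, edges s_xt_x, s_yt_y, and for each hyperedge e a path P_e of length 4 on t₁ᵉ,s₁ᵉ,t₂ᵉ,s₂ᵉ,t₃ᵉ together with edges s_{x_e}t₁ᵉ, s_{y_e}t₁ᵉ, t_{z_e}s₁ᵉ). Then H admits a perfect matching if and only if G has a 𝚅-free 2-matching covering T. -/

import Mathlib

/-- Degree of a node `v` with respect to an edge set (edges as ordered `(S,T)` pairs). -/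
def bipDeg {V : Type*} [DecidableEq V] (E : Finset (V × V)) (v : V) : ℕ :=
  (E.filter (fun e => e.1 = v ∨ e.2 = v)).card

/-- A set of edges is a matching if its edges are pairwise node-disjoint. -/
def IsMatching {V : Type*} (M : Finset (V × V)) : Prop :=
  ∀ e ∈ M, ∀ f ∈ M, e ≠ f → e.1 ≠ f.1 ∧ e.2 ≠ f.2 ∧ e.1 ≠ f.2 ∧ e.2 ≠ f.1

/-- An edge set covers a node if some edge is incident to it. -/
def Covers {V : Type*} (M : Finset (V × V)) (v : V) : Prop :=
  ∃ e ∈ M, e.1 = v ∨ e.2 = v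

/-- An `S`-link `(u, v, w)`: a path `u - v - w` of length two with `u, w ∈ S`
distinct and middle node `v ∈ T` (edges are ordered `(S,T)` pairs). -/
def IsSLink {V : Type*} (E : Finset (V × V)) (p : V × V × V) : Prop :=
  (p.1, p.2.1) ∈ E ∧ (p.2.2, p.2.1) ∈ E ∧ p.1 ≠ p.2.2

/-- The nodes of an `S`-link. -/
def linkNodes {V : Type*} [DecidableEq V] (p : V × V × V) : Finset V :=
  {p.1, p.2.1, p.2.2}

/-- The two edges of an `S`-link. -/
def linkEdges {V : Type*} [DecidableEq V] (p : V × V × V) : Finset (V × V) :=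
  {(p.1, p.2.1), (p.2.2, p.2.1)}

/-- A family of pairwise node-disjoint `S`-links. -/
def DisjointLinks {V : Type*} [DecidableEq V] (𝓕 : Finset (V × V × V)) : Prop :=
  ∀ p ∈ 𝓕, ∀ q ∈ 𝓕, p ≠ q → Disjoint (linkNodes p) (linkNodes q)

/-- A 2-matching: a subset of the edges with all degrees at most two. -/
def Is2Matching {V : Type*} [DecidableEq V] (E N : Finset (V × V)) : Prop :=
  N ⊆ E ∧ ∀ v : V, bipDeg N v ≤ 2

/-- A 2-matching is `𝚅`-free if no connected component of it is a path of length two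
with both end-nodes in `T` (i.e. a path `t₁ - s - t₂`). -/
def VFree {V : Type*} [DecidableEq V] (N : Finset (V × V)) : Prop :=
  ¬ ∃ s t₁ t₂ : V, t₁ ≠ t₂ ∧ (s, t₁) ∈ N ∧ (s, t₂) ∈ N ∧
    bipDeg N s = 2 ∧ bipDeg N t₁ = 1 ∧ bipDeg N t₂ = 1

/-- Node type for the gadget construction: `Sum.inl (v, i)` encodes the nodes
`s_v = (v,0)` and `t_v = (v,1)` for original nodes `v` (with `t_z = (z,0)` for
`z ∈ Z`), and `Sum.inr (e, j)` encodes the path `P_e = t₁ᵉ s₁ᵉ t₂ᵉ s₂ᵉ t₃ᵉ`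
(`j = 0,…,4`) for each hyperedge `e`. -/
abbrev GadgetNode (V : Type*) := (V × Fin 2) ⊕ ((V × V × V) × Fin 5)

instance {V : Type*} [DecidableEq V] : DecidableEq (GadgetNode V) :=
  fun a b => inferInstanceAs (Decidable (a = b))


section DegHelpers
variable {W : Type*} [DecidableEq W]

lemma deg_le_two (N : Finset (W × W)) (v : W) (a b : W × W)
    (h : ∀ p ∈ N, (p.1 = v ∨ p.2 = v) → p = a ∨ p = b) :
    bipDeg N v ≤ 2 := by
  unfold bipDeg
  calc (N.filter (fun e => e.1 = v ∨ e.2 = v)).card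
      ≤ ({a, b} : Finset (W × W)).card := by
        apply Finset.card_le_card
        intro p hp
        simp only [Finset.mem_filter] at hp
        simp only [Finset.mem_insert, Finset.mem_singleton]
        exact h p hp.1 hp.2
    _ ≤ 2 := by
        refine le_trans (Finset.card_insert_le _ _) ?_
        simp

lemma deg_ge_two (N : Finset (W × W)) (v : W) (a b : W × W)
    (ha : a ∈ N) (hb : b ∈ N) (hab : a ≠ b)
    (hav : a.1 = v ∨ a.2 = v) (hbv : b.1 = v ∨ b.2 = v) :
    2 ≤ bipDeg N v := by
  have hsub : ({a, b} : Finset (W × W)) ⊆ N.filter (fun e => e.1 = v ∨ e.2 = v) := by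
    intro p hp
    simp only [Finset.mem_insert, Finset.mem_singleton] at hp
    rcases hp with rfl | rfl <;> simp [Finset.mem_filter, ha, hb, hav, hbv]
  have h2 : ({a, b} : Finset (W × W)).card = 2 := Finset.card_pair hab
  unfold bipDeg
  calc 2 = ({a,b} : Finset (W × W)).card := h2.symm
    _ ≤ _ := Finset.card_le_card hsub

lemma deg_ge_one (N : Finset (W × W)) (v : W) (a : W × W)
    (ha : a ∈ N) (hav : a.1 = v ∨ a.2 = v) : 1 ≤ bipDeg N v := by
  have : a ∈ N.filter (fun e => e.1 = v ∨ e.2 = v) := by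
    simp [Finset.mem_filter, ha, hav]
  unfold bipDeg
  exact Finset.card_pos.mpr ⟨a, this⟩

lemma deg_eq_one (N : Finset (W × W)) (v : W) (a : W × W)
    (ha : a ∈ N) (hav : a.1 = v ∨ a.2 = v)
    (h : ∀ p ∈ N, (p.1 = v ∨ p.2 = v) → p = a) : bipDeg N v = 1 := by
  unfold bipDeg
  have : N.filter (fun e => e.1 = v ∨ e.2 = v) = {a} := by
    apply Finset.eq_singleton_iff_unique_mem.mpr
    refine ⟨by simp [Finset.mem_filter, ha, hav], ?_⟩
    intro p hp
    simp only [Finset.mem_filter] at hp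
    exact h p hp.1 hp.2
  rw [this, Finset.card_singleton]

lemma pair_of_deg_two (N : Finset (W × W)) (v : W) (a b : W × W)
    (h : ∀ p ∈ N, (p.1 = v ∨ p.2 = v) → p = a ∨ p = b) (hab : a ≠ b)
    (hd : bipDeg N v = 2) : a ∈ N ∧ b ∈ N := by
  have hsub : N.filter (fun e => e.1 = v ∨ e.2 = v) ⊆ ({a, b} : Finset (W × W)) := by
    intro p hp
    simp only [Finset.mem_filter] at hp
    simp only [Finset.mem_insert, Finset.mem_singleton]
    exact h p hp.1 hp.2
  have h2 : ({a, b} : Finset (W × W)).card = 2 := Finset.card_pair hab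
  have heq : N.filter (fun e => e.1 = v ∨ e.2 = v) = ({a, b} : Finset (W × W)) := by
    apply Finset.eq_of_subset_of_card_le hsub
    unfold bipDeg at hd
    omega
  constructor
  · have : a ∈ N.filter (fun e => e.1 = v ∨ e.2 = v) := by rw [heq]; simp
    exact (Finset.mem_filter.mp this).1
  · have : b ∈ N.filter (fun e => e.1 = v ∨ e.2 = v) := by rw [heq]; simp
    exact (Finset.mem_filter.mp this).1

lemma three_touch_absurd (N : Finset (W × W)) (v : W) (a b c : W × W)
    (ha : a ∈ N) (hb : b ∈ N) (hc : c ∈ N)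
    (hab : a ≠ b) (hac : a ≠ c) (hbc : b ≠ c)
    (hav : a.1 = v ∨ a.2 = v) (hbv : b.1 = v ∨ b.2 = v) (hcv : c.1 = v ∨ c.2 = v)
    (hd : bipDeg N v ≤ 2) : False := by
  have hsub : ({a, b, c} : Finset (W × W)) ⊆ N.filter (fun e => e.1 = v ∨ e.2 = v) := by
    intro p hp
    simp only [Finset.mem_insert, Finset.mem_singleton] at hp
    rcases hp with rfl | rfl | rfl <;> simp [Finset.mem_filter, ha, hb, hc, hav, hbv, hcv]
  have h3 : ({a, b, c} : Finset (W × W)).card = 3 := by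
    rw [Finset.card_insert_of_notMem (by simp [hab, hac]),
        Finset.card_insert_of_notMem (by simp [hbc]), Finset.card_singleton]
  have := Finset.card_le_card hsub
  unfold bipDeg at hd
  omega

end DegHelpers

section Forward
variable {V : Type*} [DecidableEq V]

lemma gadget_forward
    (X Y Z : Finset V) (hXY : Disjoint X Y) (hXZ : Disjoint X Z) (hYZ : Disjoint Y Z)
    (𝓔 : Finset (V × V × V)) (h𝓔 : 𝓔 ⊆ X ×ˢ Y ×ˢ Z)
    (T : Finset (GadgetNode V))
    (hT : T = X.image (fun x => Sum.inl (x, (1 : Fin 2))) ∪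
              Y.image (fun y => Sum.inl (y, (1 : Fin 2))) ∪
              Z.image (fun z => Sum.inl (z, (0 : Fin 2))) ∪
              𝓔.image (fun e => Sum.inr (e, (0 : Fin 5))) ∪
              𝓔.image (fun e => Sum.inr (e, (2 : Fin 5))) ∪
              𝓔.image (fun e => Sum.inr (e, (4 : Fin 5))))
    (E : Finset (GadgetNode V × GadgetNode V))
    (hEdef : E =
      X.image (fun x => ((Sum.inl (x, 0) : GadgetNode V), (Sum.inl (x, 1) : GadgetNode V))) ∪
      Y.image (fun y => ((Sum.inl (y, 0) : GadgetNode V), (Sum.inl (y, 1) : GadgetNode V))) ∪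
      𝓔.biUnion (fun e =>
        { ((Sum.inr (e, 1) : GadgetNode V), (Sum.inr (e, 0) : GadgetNode V)),
          (Sum.inr (e, 1), Sum.inr (e, 2)),
          (Sum.inr (e, 3), Sum.inr (e, 2)),
          (Sum.inr (e, 3), Sum.inr (e, 4)),
          (Sum.inl (e.1, 0), Sum.inr (e, 0)),
          (Sum.inl (e.2.1, 0), Sum.inr (e, 0)),
          (Sum.inr (e, 1), Sum.inl (e.2.2, 0)) }))
    (𝓜 : Finset (V × V × V)) (hsub : 𝓜 ⊆ 𝓔)
    (hmatch : ∀ m ∈ 𝓜, ∀ m' ∈ 𝓜, m ≠ m' →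
          m.1 ≠ m'.1 ∧ m.2.1 ≠ m'.2.1 ∧ m.2.2 ≠ m'.2.2)
    (covX : ∀ x ∈ X, ∃ m ∈ 𝓜, m.1 = x) (covY : ∀ y ∈ Y, ∃ m ∈ 𝓜, m.2.1 = y)
    (covZ : ∀ z ∈ Z, ∃ m ∈ 𝓜, m.2.2 = z) :
    ∃ N : Finset (GadgetNode V × GadgetNode V),
        Is2Matching E N ∧ VFree N ∧ ∀ t ∈ T, Covers N t := by
  classical
  -- basic membership facts
  have memX : ∀ e ∈ 𝓔, e.1 ∈ X := by
    intro e he; have := h𝓔 he; simp only [Finset.mem_product] at this; exact this.1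
  have memY : ∀ e ∈ 𝓔, e.2.1 ∈ Y := by
    intro e he; have := h𝓔 he; simp only [Finset.mem_product] at this; exact this.2.1
  have memZ : ∀ e ∈ 𝓔, e.2.2 ∈ Z := by
    intro e he; have := h𝓔 he; simp only [Finset.mem_product] at this; exact this.2.2
  have neXY : ∀ a ∈ X, ∀ b ∈ Y, a ≠ b := fun a ha b hb h =>
    Finset.disjoint_left.mp hXY ha (h ▸ hb)
  have neXZ : ∀ a ∈ X, ∀ b ∈ Z, a ≠ b := fun a ha b hb h =>
    Finset.disjoint_left.mp hXZ ha (h ▸ hb)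
  have neYZ : ∀ a ∈ Y, ∀ b ∈ Z, a ≠ b := fun a ha b hb h =>
    Finset.disjoint_left.mp hYZ ha (h ▸ hb)
  have uniqX : ∀ e ∈ 𝓜, ∀ e' ∈ 𝓜, e.1 = e'.1 → e = e' := by
    intro e he e' he' h
    by_contra hne
    exact (hmatch e he e' he' hne).1 h
  have uniqY : ∀ e ∈ 𝓜, ∀ e' ∈ 𝓜, e.2.1 = e'.2.1 → e = e' := by
    intro e he e' he' h
    by_contra hne
    exact (hmatch e he e' he' hne).2.1 h
  have uniqZ : ∀ e ∈ 𝓜, ∀ e' ∈ 𝓜, e.2.2 = e'.2.2 → e = e' := by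
    intro e he e' he' h
    by_contra hne
    exact (hmatch e he e' he' hne).2.2 h
  -- the 2-matching
  set N : Finset (GadgetNode V × GadgetNode V) :=
    X.image (fun x => ((Sum.inl (x, 0) : GadgetNode V), (Sum.inl (x, 1) : GadgetNode V))) ∪
    Y.image (fun y => ((Sum.inl (y, 0) : GadgetNode V), (Sum.inl (y, 1) : GadgetNode V))) ∪
    𝓜.biUnion (fun e =>
      { ((Sum.inl (e.1, 0) : GadgetNode V), (Sum.inr (e, 0) : GadgetNode V)),
        (Sum.inl (e.2.1, 0), Sum.inr (e, 0)),
        (Sum.inr (e, 1), Sum.inl (e.2.2, 0)),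
        (Sum.inr (e, 1), Sum.inr (e, 2)),
        (Sum.inr (e, 3), Sum.inr (e, 2)),
        (Sum.inr (e, 3), Sum.inr (e, 4)) }) ∪
    (𝓔.filter (fun e => e ∉ 𝓜)).biUnion (fun e =>
      { ((Sum.inr (e, 1) : GadgetNode V), (Sum.inr (e, 0) : GadgetNode V)),
        (Sum.inr (e, 1), Sum.inr (e, 2)),
        (Sum.inr (e, 3), Sum.inr (e, 2)),
        (Sum.inr (e, 3), Sum.inr (e, 4)) }) with hNdef
  have hmemN : ∀ p : GadgetNode V × GadgetNode V, p ∈ N ↔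
      (∃ x ∈ X, p = ((Sum.inl (x, 0) : GadgetNode V), (Sum.inl (x, 1) : GadgetNode V))) ∨
      (∃ y ∈ Y, p = ((Sum.inl (y, 0) : GadgetNode V), (Sum.inl (y, 1) : GadgetNode V))) ∨
      (∃ e ∈ 𝓜,
        p = ((Sum.inl (e.1, 0) : GadgetNode V), (Sum.inr (e, 0) : GadgetNode V)) ∨
        p = (Sum.inl (e.2.1, 0), Sum.inr (e, 0)) ∨
        p = (Sum.inr (e, 1), Sum.inl (e.2.2, 0)) ∨
        p = (Sum.inr (e, 1), Sum.inr (e, 2)) ∨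
        p = (Sum.inr (e, 3), Sum.inr (e, 2)) ∨
        p = (Sum.inr (e, 3), Sum.inr (e, 4))) ∨
      (∃ e, (e ∈ 𝓔 ∧ e ∉ 𝓜) ∧
        (p = ((Sum.inr (e, 1) : GadgetNode V), (Sum.inr (e, 0) : GadgetNode V)) ∨
        p = (Sum.inr (e, 1), Sum.inr (e, 2)) ∨
        p = (Sum.inr (e, 3), Sum.inr (e, 2)) ∨
        p = (Sum.inr (e, 3), Sum.inr (e, 4)))) := by
    intro p
    simp only [hNdef, Finset.mem_union, Finset.mem_image, Finset.mem_biUnion,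
      Finset.mem_insert, Finset.mem_singleton, Finset.mem_filter, eq_comm, or_assoc]
  have hdeg : ∀ v : GadgetNode V, bipDeg N v ≤ 2 := by
    intro v
    rcases v with ⟨w, i⟩ | ⟨e, j⟩
    · fin_cases i
      · -- v = Sum.inl (w, 0)
        by_cases hw : w ∈ X
        · obtain ⟨e0, he0, he0x⟩ := covX w hw
          apply deg_le_two N _ ((Sum.inl (w,0) : GadgetNode V), (Sum.inl (w,1) : GadgetNode V))
            ((Sum.inl (e0.1,0) : GadgetNode V), (Sum.inr (e0,0) : GadgetNode V))
          intro p hp ht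
          rw [hmemN] at hp
          rcases hp with ⟨x,hx,rfl⟩|⟨y,hy,rfl⟩|⟨e,he,hc⟩|⟨e,⟨heE,heM⟩,hc⟩
          · simp only [Sum.inl.injEq, Prod.mk.injEq] at ht
            simp at ht
            subst ht; left; rfl
          · simp at ht
            subst ht
            exact absurd hy (Finset.disjoint_left.mp hXY hw)
          · rcases hc with rfl|rfl|rfl|rfl|rfl|rfl
            · simp at ht
              have : e = e0 := uniqX e he e0 he0 (ht.trans he0x.symm)
              right; rw [this]
            · simp at ht
              exact absurd (ht ▸ memY e (hsub he)) (Finset.disjoint_left.mp hXY hw)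
            · simp at ht
              exact absurd (ht ▸ memZ e (hsub he)) (Finset.disjoint_left.mp hXZ hw)
            · simp at ht
            · simp at ht
            · simp at ht
          · rcases hc with rfl|rfl|rfl|rfl <;> simp at ht
        by_cases hw' : w ∈ Y
        · obtain ⟨e0, he0, he0y⟩ := covY w hw'
          apply deg_le_two N _ ((Sum.inl (w,0) : GadgetNode V), (Sum.inl (w,1) : GadgetNode V))
            ((Sum.inl (e0.2.1,0) : GadgetNode V), (Sum.inr (e0,0) : GadgetNode V))
          intro p hp ht
          rw [hmemN] at hp
          rcases hp with ⟨x,hx,rfl⟩|⟨y,hy,rfl⟩|⟨e,he,hc⟩|⟨e,⟨heE,heM⟩,hc⟩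
          · simp at ht
            subst ht
            exact absurd hw' (Finset.disjoint_left.mp hXY hx)
          · simp at ht
            subst ht; left; rfl
          · rcases hc with rfl|rfl|rfl|rfl|rfl|rfl
            · simp at ht
              exact absurd hw' (Finset.disjoint_left.mp hXY (ht ▸ memX e (hsub he)))
            · simp at ht
              have : e = e0 := uniqY e he e0 he0 (ht.trans he0y.symm)
              right; rw [this]
            · simp at ht
              exact absurd (ht ▸ memZ e (hsub he)) (Finset.disjoint_left.mp hYZ hw')
            · simp at ht
            · simp at ht
            · simp at ht
          · rcases hc with rfl|rfl|rfl|rfl <;> simp at ht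
        by_cases hw'' : w ∈ Z
        · obtain ⟨e0, he0, he0z⟩ := covZ w hw''
          apply deg_le_two N _ ((Sum.inr (e0,1) : GadgetNode V), (Sum.inl (e0.2.2,0) : GadgetNode V))
            ((Sum.inr (e0,1) : GadgetNode V), (Sum.inl (e0.2.2,0) : GadgetNode V))
          intro p hp ht
          rw [hmemN] at hp
          rcases hp with ⟨x,hx,rfl⟩|⟨y,hy,rfl⟩|⟨e,he,hc⟩|⟨e,⟨heE,heM⟩,hc⟩
          · simp at ht
            subst ht
            exact absurd hw'' (Finset.disjoint_left.mp hXZ hx)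
          · simp at ht
            subst ht
            exact absurd hw'' (Finset.disjoint_left.mp hYZ hy)
          · rcases hc with rfl|rfl|rfl|rfl|rfl|rfl
            · simp at ht
              exact absurd hw'' (Finset.disjoint_left.mp hXZ (ht ▸ memX e (hsub he)))
            · simp at ht
              exact absurd hw'' (Finset.disjoint_left.mp hYZ (ht ▸ memY e (hsub he)))
            · simp at ht
              have : e = e0 := uniqZ e he e0 he0 (ht.trans he0z.symm)
              left; rw [this]
            · simp at ht
            · simp at ht
            · simp at ht
          · rcases hc with rfl|rfl|rfl|rfl <;> simp at ht
        · apply deg_le_two N _ ((Sum.inl (w,0) : GadgetNode V), (Sum.inl (w,0) : GadgetNode V))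
            ((Sum.inl (w,0) : GadgetNode V), (Sum.inl (w,0) : GadgetNode V))
          intro p hp ht
          rw [hmemN] at hp
          rcases hp with ⟨x,hx,rfl⟩|⟨y,hy,rfl⟩|⟨e,he,hc⟩|⟨e,⟨heE,heM⟩,hc⟩
          · simp at ht; subst ht; exact absurd hx hw
          · simp at ht; subst ht; exact absurd hy hw'
          · rcases hc with rfl|rfl|rfl|rfl|rfl|rfl
            · simp at ht; exact absurd (ht ▸ memX e (hsub he)) hw
            · simp at ht; exact absurd (ht ▸ memY e (hsub he)) hw'
            · simp at ht; exact absurd (ht ▸ memZ e (hsub he)) hw''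
            · simp at ht
            · simp at ht
            · simp at ht
          · rcases hc with rfl|rfl|rfl|rfl <;> simp at ht
      · -- v = Sum.inl (w, 1)
        apply deg_le_two N _ ((Sum.inl (w,0) : GadgetNode V), (Sum.inl (w,1) : GadgetNode V))
          ((Sum.inl (w,0) : GadgetNode V), (Sum.inl (w,1) : GadgetNode V))
        intro p hp ht
        rw [hmemN] at hp
        rcases hp with ⟨x,hx,rfl⟩|⟨y,hy,rfl⟩|⟨e,he,hc⟩|⟨e,⟨heE,heM⟩,hc⟩
        · simp at ht; subst ht; left; rfl
        · simp at ht; subst ht; left; rfl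
        · rcases hc with rfl|rfl|rfl|rfl|rfl|rfl <;> simp at ht
        · rcases hc with rfl|rfl|rfl|rfl <;> simp at ht
    · fin_cases j
      · -- v = Sum.inr (e, 0)
        by_cases he : e ∈ 𝓜
        · apply deg_le_two N _ ((Sum.inl (e.1,0) : GadgetNode V), (Sum.inr (e,0) : GadgetNode V))
            ((Sum.inl (e.2.1,0) : GadgetNode V), (Sum.inr (e,0) : GadgetNode V))
          intro p hp ht
          rw [hmemN] at hp
          rcases hp with ⟨x,hx,rfl⟩|⟨y,hy,rfl⟩|⟨e',he',hc⟩|⟨e',⟨heE',heM'⟩,hc⟩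
          · simp at ht
          · simp at ht
          · rcases hc with rfl|rfl|rfl|rfl|rfl|rfl
            · simp at ht; subst ht; left; rfl
            · simp at ht; subst ht; right; rfl
            · simp at ht
            · simp at ht
            · simp at ht
            · simp at ht
          · rcases hc with rfl|rfl|rfl|rfl
            · simp at ht; subst ht; exact absurd he heM'
            · simp at ht
            · simp at ht
            · simp at ht
        · apply deg_le_two N _ ((Sum.inr (e,1) : GadgetNode V), (Sum.inr (e,0) : GadgetNode V))
            ((Sum.inr (e,1) : GadgetNode V), (Sum.inr (e,0) : GadgetNode V))
          intro p hp ht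
          rw [hmemN] at hp
          rcases hp with ⟨x,hx,rfl⟩|⟨y,hy,rfl⟩|⟨e',he',hc⟩|⟨e',⟨heE',heM'⟩,hc⟩
          · simp at ht
          · simp at ht
          · rcases hc with rfl|rfl|rfl|rfl|rfl|rfl
            · simp at ht; subst ht; exact absurd he' he
            · simp at ht; subst ht; exact absurd he' he
            · simp at ht
            · simp at ht
            · simp at ht
            · simp at ht
          · rcases hc with rfl|rfl|rfl|rfl
            · simp at ht; subst ht; left; rfl
            · simp at ht
            · simp at ht
            · simp at ht
      · -- v = Sum.inr (e, 1)
        by_cases he : e ∈ 𝓜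
        · apply deg_le_two N _ ((Sum.inr (e,1) : GadgetNode V), (Sum.inl (e.2.2,0) : GadgetNode V))
            ((Sum.inr (e,1) : GadgetNode V), (Sum.inr (e,2) : GadgetNode V))
          intro p hp ht
          rw [hmemN] at hp
          rcases hp with ⟨x,hx,rfl⟩|⟨y,hy,rfl⟩|⟨e',he',hc⟩|⟨e',⟨heE',heM'⟩,hc⟩
          · simp at ht
          · simp at ht
          · rcases hc with rfl|rfl|rfl|rfl|rfl|rfl
            · simp at ht
            · simp at ht
            · simp at ht; subst ht; left; rfl
            · simp at ht; subst ht; right; rfl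
            · simp at ht
            · simp at ht
          · rcases hc with rfl|rfl|rfl|rfl
            · simp at ht; subst ht; exact absurd he heM'
            · simp at ht; subst ht; exact absurd he heM'
            · simp at ht
            · simp at ht
        · apply deg_le_two N _ ((Sum.inr (e,1) : GadgetNode V), (Sum.inr (e,0) : GadgetNode V))
            ((Sum.inr (e,1) : GadgetNode V), (Sum.inr (e,2) : GadgetNode V))
          intro p hp ht
          rw [hmemN] at hp
          rcases hp with ⟨x,hx,rfl⟩|⟨y,hy,rfl⟩|⟨e',he',hc⟩|⟨e',⟨heE',heM'⟩,hc⟩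
          · simp at ht
          · simp at ht
          · rcases hc with rfl|rfl|rfl|rfl|rfl|rfl
            · simp at ht
            · simp at ht
            · simp at ht; subst ht; exact absurd he' he
            · simp at ht; subst ht; exact absurd he' he
            · simp at ht
            · simp at ht
          · rcases hc with rfl|rfl|rfl|rfl
            · simp at ht; subst ht; left; rfl
            · simp at ht; subst ht; right; rfl
            · simp at ht
            · simp at ht
      · -- v = Sum.inr (e, 2)
        apply deg_le_two N _ ((Sum.inr (e,1) : GadgetNode V), (Sum.inr (e,2) : GadgetNode V))
          ((Sum.inr (e,3) : GadgetNode V), (Sum.inr (e,2) : GadgetNode V))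
        intro p hp ht
        rw [hmemN] at hp
        rcases hp with ⟨x,hx,rfl⟩|⟨y,hy,rfl⟩|⟨e',he',hc⟩|⟨e',⟨heE',heM'⟩,hc⟩
        · simp at ht
        · simp at ht
        · rcases hc with rfl|rfl|rfl|rfl|rfl|rfl
          · simp at ht
          · simp at ht
          · simp at ht
          · simp at ht; subst ht; left; rfl
          · simp at ht; subst ht; right; rfl
          · simp at ht
        · rcases hc with rfl|rfl|rfl|rfl
          · simp at ht
          · simp at ht; subst ht; left; rfl
          · simp at ht; subst ht; right; rfl
          · simp at ht
      · -- v = Sum.inr (e, 3)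
        apply deg_le_two N _ ((Sum.inr (e,3) : GadgetNode V), (Sum.inr (e,2) : GadgetNode V))
          ((Sum.inr (e,3) : GadgetNode V), (Sum.inr (e,4) : GadgetNode V))
        intro p hp ht
        rw [hmemN] at hp
        rcases hp with ⟨x,hx,rfl⟩|⟨y,hy,rfl⟩|⟨e',he',hc⟩|⟨e',⟨heE',heM'⟩,hc⟩
        · simp at ht
        · simp at ht
        · rcases hc with rfl|rfl|rfl|rfl|rfl|rfl
          · simp at ht
          · simp at ht
          · simp at ht
          · simp at ht
          · simp at ht; subst ht; left; rfl
          · simp at ht; subst ht; right; rfl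
        · rcases hc with rfl|rfl|rfl|rfl
          · simp at ht
          · simp at ht
          · simp at ht; subst ht; left; rfl
          · simp at ht; subst ht; right; rfl
      · -- v = Sum.inr (e, 4)
        apply deg_le_two N _ ((Sum.inr (e,3) : GadgetNode V), (Sum.inr (e,4) : GadgetNode V))
          ((Sum.inr (e,3) : GadgetNode V), (Sum.inr (e,4) : GadgetNode V))
        intro p hp ht
        rw [hmemN] at hp
        rcases hp with ⟨x,hx,rfl⟩|⟨y,hy,rfl⟩|⟨e',he',hc⟩|⟨e',⟨heE',heM'⟩,hc⟩
        · simp at ht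
        · simp at ht
        · rcases hc with rfl|rfl|rfl|rfl|rfl|rfl
          · simp at ht
          · simp at ht
          · simp at ht
          · simp at ht
          · simp at ht
          · simp at ht; subst ht; left; rfl
        · rcases hc with rfl|rfl|rfl|rfl
          · simp at ht
          · simp at ht
          · simp at ht
          · simp at ht; subst ht; left; rfl
  have hNE : N ⊆ E := by
    intro p hp
    rw [hmemN] at hp
    rw [hEdef]
    simp only [Finset.mem_union, Finset.mem_image, Finset.mem_biUnion, Finset.mem_insert,
      Finset.mem_singleton]
    rcases hp with ⟨x,hx,rfl⟩|⟨y,hy,rfl⟩|⟨e,he,hc⟩|⟨e,⟨heE,heM⟩,hc⟩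
    · exact Or.inl (Or.inl ⟨x, hx, rfl⟩)
    · exact Or.inl (Or.inr ⟨y, hy, rfl⟩)
    · exact Or.inr ⟨e, hsub he, by rcases hc with rfl|rfl|rfl|rfl|rfl|rfl <;> simp⟩
    · exact Or.inr ⟨e, heE, by rcases hc with rfl|rfl|rfl|rfl <;> simp⟩
  have hdeg2a : ∀ e ∈ 𝓜, 2 ≤ bipDeg N (Sum.inr (e,0) : GadgetNode V) := by
    intro e he
    apply deg_ge_two N _ ((Sum.inl (e.1,0) : GadgetNode V), (Sum.inr (e,0) : GadgetNode V))
      ((Sum.inl (e.2.1,0) : GadgetNode V), (Sum.inr (e,0) : GadgetNode V))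
    · rw [hmemN]; exact Or.inr (Or.inr (Or.inl ⟨e, he, Or.inl rfl⟩))
    · rw [hmemN]; exact Or.inr (Or.inr (Or.inl ⟨e, he, Or.inr (Or.inl rfl)⟩))
    · have : e.1 ≠ e.2.1 := fun h =>
        Finset.disjoint_left.mp hXY (memX e (hsub he)) (h ▸ memY e (hsub he))
      simp [this]
    · exact Or.inr rfl
    · exact Or.inr rfl
  have hmem12 : ∀ e ∈ 𝓔, ((Sum.inr (e,1) : GadgetNode V), (Sum.inr (e,2) : GadgetNode V)) ∈ N := by
    intro e he
    rw [hmemN]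
    by_cases hM : e ∈ 𝓜
    · exact Or.inr (Or.inr (Or.inl ⟨e, hM, Or.inr (Or.inr (Or.inr (Or.inl rfl)))⟩))
    · exact Or.inr (Or.inr (Or.inr ⟨e, ⟨he, hM⟩, Or.inr (Or.inl rfl)⟩))
  have hmem32 : ∀ e ∈ 𝓔, ((Sum.inr (e,3) : GadgetNode V), (Sum.inr (e,2) : GadgetNode V)) ∈ N := by
    intro e he
    rw [hmemN]
    by_cases hM : e ∈ 𝓜
    · exact Or.inr (Or.inr (Or.inl ⟨e, hM, Or.inr (Or.inr (Or.inr (Or.inr (Or.inl rfl))))⟩))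
    · exact Or.inr (Or.inr (Or.inr ⟨e, ⟨he, hM⟩, Or.inr (Or.inr (Or.inl rfl))⟩))
  have hmem34 : ∀ e ∈ 𝓔, ((Sum.inr (e,3) : GadgetNode V), (Sum.inr (e,4) : GadgetNode V)) ∈ N := by
    intro e he
    rw [hmemN]
    by_cases hM : e ∈ 𝓜
    · exact Or.inr (Or.inr (Or.inl ⟨e, hM, Or.inr (Or.inr (Or.inr (Or.inr (Or.inr rfl))))⟩))
    · exact Or.inr (Or.inr (Or.inr ⟨e, ⟨he, hM⟩, Or.inr (Or.inr (Or.inr rfl))⟩))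
  have hdeg2c : ∀ e ∈ 𝓔, 2 ≤ bipDeg N (Sum.inr (e,2) : GadgetNode V) := by
    intro e he
    apply deg_ge_two N _ ((Sum.inr (e,1) : GadgetNode V), (Sum.inr (e,2) : GadgetNode V))
      ((Sum.inr (e,3) : GadgetNode V), (Sum.inr (e,2) : GadgetNode V))
      (hmem12 e he) (hmem32 e he) (by simp) (Or.inr rfl) (Or.inr rfl)
  have hvf : VFree N := by
    rintro ⟨s, t₁, t₂, hne, h1, h2, hds, hd1, hd2⟩
    rw [hmemN] at h1 h2
    rcases h1 with ⟨x,hx,hc⟩|⟨y,hy,hc⟩|⟨e,he,hc⟩|⟨e,⟨heE,heM⟩,hc⟩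
    · simp only [Prod.mk.injEq] at hc
      obtain ⟨rfl, rfl⟩ := hc
      rcases h2 with ⟨x',hx',hc2⟩|⟨y',hy',hc2⟩|⟨e',he',hc2⟩|⟨e',⟨heE',heM'⟩,hc2⟩
      · simp at hc2
        obtain ⟨rfl, rfl⟩ := hc2
        exact hne rfl
      · simp at hc2
        obtain ⟨rfl, rfl⟩ := hc2
        exact absurd hy' (Finset.disjoint_left.mp hXY hx)
      · rcases hc2 with hc2|hc2|hc2|hc2|hc2|hc2
        · simp at hc2
          obtain ⟨-, rfl⟩ := hc2
          have := hdeg2a e' he'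
          omega
        · simp at hc2
          obtain ⟨-, rfl⟩ := hc2
          have := hdeg2a e' he'
          omega
        · exact absurd hc2 (by simp)
        · exact absurd hc2 (by simp)
        · exact absurd hc2 (by simp)
        · exact absurd hc2 (by simp)
      · rcases hc2 with hc2|hc2|hc2|hc2 <;> exact absurd hc2 (by simp)
    · simp only [Prod.mk.injEq] at hc
      obtain ⟨rfl, rfl⟩ := hc
      rcases h2 with ⟨x',hx',hc2⟩|⟨y',hy',hc2⟩|⟨e',he',hc2⟩|⟨e',⟨heE',heM'⟩,hc2⟩
      · simp at hc2
        obtain ⟨rfl, rfl⟩ := hc2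
        exact absurd hy (Finset.disjoint_left.mp hXY hx')
      · simp at hc2
        obtain ⟨rfl, rfl⟩ := hc2
        exact hne rfl
      · rcases hc2 with hc2|hc2|hc2|hc2|hc2|hc2
        · simp at hc2
          obtain ⟨-, rfl⟩ := hc2
          have := hdeg2a e' he'
          omega
        · simp at hc2
          obtain ⟨-, rfl⟩ := hc2
          have := hdeg2a e' he'
          omega
        · exact absurd hc2 (by simp)
        · exact absurd hc2 (by simp)
        · exact absurd hc2 (by simp)
        · exact absurd hc2 (by simp)
      · rcases hc2 with hc2|hc2|hc2|hc2 <;> exact absurd hc2 (by simp)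
    · rcases hc with hc|hc|hc|hc|hc|hc <;> simp only [Prod.mk.injEq] at hc
      · obtain ⟨rfl, rfl⟩ := hc
        have := hdeg2a e he
        omega
      · obtain ⟨rfl, rfl⟩ := hc
        have := hdeg2a e he
        omega
      · -- s = inr (e,1), t₁ = inl (e.2.2, 0), e ∈ 𝓜
        obtain ⟨rfl, rfl⟩ := hc
        rcases h2 with ⟨x',hx',hc2⟩|⟨y',hy',hc2⟩|⟨e',he',hc2⟩|⟨e',⟨heE',heM'⟩,hc2⟩
        · exact absurd hc2 (by simp)
        · exact absurd hc2 (by simp)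
        · rcases hc2 with hc2|hc2|hc2|hc2|hc2|hc2
          · exact absurd hc2 (by simp)
          · exact absurd hc2 (by simp)
          · simp at hc2
            obtain ⟨rfl, rfl⟩ := hc2
            exact hne rfl
          · simp at hc2
            obtain ⟨rfl, rfl⟩ := hc2
            have := hdeg2c e (hsub he)
            omega
          · exact absurd hc2 (by simp)
          · exact absurd hc2 (by simp)
        · rcases hc2 with hc2|hc2|hc2|hc2
          · simp at hc2
            obtain ⟨rfl, rfl⟩ := hc2
            exact absurd he heM'
          · simp at hc2
            obtain ⟨rfl, rfl⟩ := hc2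
            exact absurd he heM'
          · exact absurd hc2 (by simp)
          · exact absurd hc2 (by simp)
      · obtain ⟨rfl, rfl⟩ := hc
        have := hdeg2c e (hsub he)
        omega
      · obtain ⟨rfl, rfl⟩ := hc
        have := hdeg2c e (hsub he)
        omega
      · -- s = inr (e,3), t₁ = inr (e,4)
        obtain ⟨rfl, rfl⟩ := hc
        rcases h2 with ⟨x',hx',hc2⟩|⟨y',hy',hc2⟩|⟨e',he',hc2⟩|⟨e',⟨heE',heM'⟩,hc2⟩
        · exact absurd hc2 (by simp)
        · exact absurd hc2 (by simp)
        · rcases hc2 with hc2|hc2|hc2|hc2|hc2|hc2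
          · exact absurd hc2 (by simp)
          · exact absurd hc2 (by simp)
          · exact absurd hc2 (by simp)
          · exact absurd hc2 (by simp)
          · simp at hc2
            obtain ⟨rfl, rfl⟩ := hc2
            have := hdeg2c e (hsub he)
            omega
          · simp at hc2
            obtain ⟨rfl, rfl⟩ := hc2
            exact hne rfl
        · rcases hc2 with hc2|hc2|hc2|hc2
          · exact absurd hc2 (by simp)
          · exact absurd hc2 (by simp)
          · simp at hc2
            obtain ⟨rfl, rfl⟩ := hc2
            have := hdeg2c e (hsub he)
            omega
          · simp at hc2
            obtain ⟨rfl, rfl⟩ := hc2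
            exact hne rfl
    · rcases hc with hc|hc|hc|hc <;> simp only [Prod.mk.injEq] at hc
      · -- s = inr (e,1), t₁ = inr (e,0), e ∉ 𝓜
        obtain ⟨rfl, rfl⟩ := hc
        rcases h2 with ⟨x',hx',hc2⟩|⟨y',hy',hc2⟩|⟨e',he',hc2⟩|⟨e',⟨heE',heM'⟩,hc2⟩
        · exact absurd hc2 (by simp)
        · exact absurd hc2 (by simp)
        · rcases hc2 with hc2|hc2|hc2|hc2|hc2|hc2
          · exact absurd hc2 (by simp)
          · exact absurd hc2 (by simp)
          · simp at hc2
            obtain ⟨rfl, rfl⟩ := hc2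
            exact absurd he' heM
          · simp at hc2
            obtain ⟨rfl, rfl⟩ := hc2
            exact absurd he' heM
          · exact absurd hc2 (by simp)
          · exact absurd hc2 (by simp)
        · rcases hc2 with hc2|hc2|hc2|hc2
          · simp at hc2
            obtain ⟨rfl, rfl⟩ := hc2
            exact hne rfl
          · simp at hc2
            obtain ⟨rfl, rfl⟩ := hc2
            have := hdeg2c e heE
            omega
          · exact absurd hc2 (by simp)
          · exact absurd hc2 (by simp)
      · obtain ⟨rfl, rfl⟩ := hc
        have := hdeg2c e heE
        omega
      · obtain ⟨rfl, rfl⟩ := hc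
        have := hdeg2c e heE
        omega
      · -- s = inr (e,3), t₁ = inr (e,4), e ∉ 𝓜
        obtain ⟨rfl, rfl⟩ := hc
        rcases h2 with ⟨x',hx',hc2⟩|⟨y',hy',hc2⟩|⟨e',he',hc2⟩|⟨e',⟨heE',heM'⟩,hc2⟩
        · exact absurd hc2 (by simp)
        · exact absurd hc2 (by simp)
        · rcases hc2 with hc2|hc2|hc2|hc2|hc2|hc2
          · exact absurd hc2 (by simp)
          · exact absurd hc2 (by simp)
          · exact absurd hc2 (by simp)
          · exact absurd hc2 (by simp)
          · simp at hc2
            obtain ⟨rfl, rfl⟩ := hc2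
            have := hdeg2c e heE
            omega
          · simp at hc2
            obtain ⟨rfl, rfl⟩ := hc2
            exact hne rfl
        · rcases hc2 with hc2|hc2|hc2|hc2
          · exact absurd hc2 (by simp)
          · exact absurd hc2 (by simp)
          · simp at hc2
            obtain ⟨rfl, rfl⟩ := hc2
            have := hdeg2c e heE
            omega
          · simp at hc2
            obtain ⟨rfl, rfl⟩ := hc2
            exact hne rfl
  have hcov : ∀ t ∈ T, Covers N t := by
    intro t ht'
    rw [hT] at ht'
    simp only [Finset.mem_union, Finset.mem_image] at ht'
    rcases ht' with ((((⟨x,hx,rfl⟩|⟨y,hy,rfl⟩)|⟨z,hz,rfl⟩)|⟨e,he,rfl⟩)|⟨e,he,rfl⟩)|⟨e,he,rfl⟩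
    · exact ⟨((Sum.inl (x,0) : GadgetNode V), (Sum.inl (x,1) : GadgetNode V)),
        (hmemN _).mpr (Or.inl ⟨x, hx, rfl⟩), Or.inr rfl⟩
    · exact ⟨((Sum.inl (y,0) : GadgetNode V), (Sum.inl (y,1) : GadgetNode V)),
        (hmemN _).mpr (Or.inr (Or.inl ⟨y, hy, rfl⟩)), Or.inr rfl⟩
    · obtain ⟨e0, he0, he0z⟩ := covZ z hz
      refine ⟨((Sum.inr (e0,1) : GadgetNode V), (Sum.inl (e0.2.2,0) : GadgetNode V)),
        (hmemN _).mpr (Or.inr (Or.inr (Or.inl ⟨e0, he0, Or.inr (Or.inr (Or.inl rfl))⟩))),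
        Or.inr ?_⟩
      rw [he0z]
    · by_cases hM : e ∈ 𝓜
      · exact ⟨((Sum.inl (e.1,0) : GadgetNode V), (Sum.inr (e,0) : GadgetNode V)),
          (hmemN _).mpr (Or.inr (Or.inr (Or.inl ⟨e, hM, Or.inl rfl⟩))), Or.inr rfl⟩
      · exact ⟨((Sum.inr (e,1) : GadgetNode V), (Sum.inr (e,0) : GadgetNode V)),
          (hmemN _).mpr (Or.inr (Or.inr (Or.inr ⟨e, ⟨he, hM⟩, Or.inl rfl⟩))), Or.inr rfl⟩
    · exact ⟨_, hmem12 e he, Or.inr rfl⟩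
    · exact ⟨_, hmem34 e he, Or.inr rfl⟩
  exact ⟨N, ⟨hNE, hdeg⟩, hvf, hcov⟩

end Forward

section Backward
variable {V : Type*} [DecidableEq V]

lemma gadget_backward
    (X Y Z : Finset V) (hXY : Disjoint X Y) (hXZ : Disjoint X Z) (hYZ : Disjoint Y Z)
    (𝓔 : Finset (V × V × V)) (h𝓔 : 𝓔 ⊆ X ×ˢ Y ×ˢ Z)
    (hregX : ∀ x ∈ X, (𝓔.filter (fun e => e.1 = x)).card = 3)
    (hregY : ∀ y ∈ Y, (𝓔.filter (fun e => e.2.1 = y)).card = 3)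
    (hregZ : ∀ z ∈ Z, (𝓔.filter (fun e => e.2.2 = z)).card = 3)
    (T : Finset (GadgetNode V))
    (hT : T = X.image (fun x => Sum.inl (x, (1 : Fin 2))) ∪
              Y.image (fun y => Sum.inl (y, (1 : Fin 2))) ∪
              Z.image (fun z => Sum.inl (z, (0 : Fin 2))) ∪
              𝓔.image (fun e => Sum.inr (e, (0 : Fin 5))) ∪
              𝓔.image (fun e => Sum.inr (e, (2 : Fin 5))) ∪
              𝓔.image (fun e => Sum.inr (e, (4 : Fin 5))))
    (E : Finset (GadgetNode V × GadgetNode V))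
    (hEdef : E =
      X.image (fun x => ((Sum.inl (x, 0) : GadgetNode V), (Sum.inl (x, 1) : GadgetNode V))) ∪
      Y.image (fun y => ((Sum.inl (y, 0) : GadgetNode V), (Sum.inl (y, 1) : GadgetNode V))) ∪
      𝓔.biUnion (fun e =>
        { ((Sum.inr (e, 1) : GadgetNode V), (Sum.inr (e, 0) : GadgetNode V)),
          (Sum.inr (e, 1), Sum.inr (e, 2)),
          (Sum.inr (e, 3), Sum.inr (e, 2)),
          (Sum.inr (e, 3), Sum.inr (e, 4)),
          (Sum.inl (e.1, 0), Sum.inr (e, 0)),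
          (Sum.inl (e.2.1, 0), Sum.inr (e, 0)),
          (Sum.inr (e, 1), Sum.inl (e.2.2, 0)) }))
    (N : Finset (GadgetNode V × GadgetNode V))
    (hNE : N ⊆ E) (hdeg : ∀ v, bipDeg N v ≤ 2) (hvf : VFree N)
    (hcov : ∀ t ∈ T, Covers N t) :
    ∃ 𝓜 ⊆ 𝓔,
        (∀ m ∈ 𝓜, ∀ m' ∈ 𝓜, m ≠ m' →
          m.1 ≠ m'.1 ∧ m.2.1 ≠ m'.2.1 ∧ m.2.2 ≠ m'.2.2) ∧
        (∀ x ∈ X, ∃ m ∈ 𝓜, m.1 = x) ∧ (∀ y ∈ Y, ∃ m ∈ 𝓜, m.2.1 = y) ∧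
        (∀ z ∈ Z, ∃ m ∈ 𝓜, m.2.2 = z) := by
  classical
  have memX : ∀ e ∈ 𝓔, e.1 ∈ X := by
    intro e he; have := h𝓔 he; simp only [Finset.mem_product] at this; exact this.1
  have memY : ∀ e ∈ 𝓔, e.2.1 ∈ Y := by
    intro e he; have := h𝓔 he; simp only [Finset.mem_product] at this; exact this.2.1
  have memZ : ∀ e ∈ 𝓔, e.2.2 ∈ Z := by
    intro e he; have := h𝓔 he; simp only [Finset.mem_product] at this; exact this.2.2
  have hmemE : ∀ p ∈ N,
      (∃ x ∈ X, p = ((Sum.inl (x, 0) : GadgetNode V), (Sum.inl (x, 1) : GadgetNode V))) ∨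
      (∃ y ∈ Y, p = ((Sum.inl (y, 0) : GadgetNode V), (Sum.inl (y, 1) : GadgetNode V))) ∨
      (∃ e ∈ 𝓔,
        p = ((Sum.inr (e, 1) : GadgetNode V), (Sum.inr (e, 0) : GadgetNode V)) ∨
        p = (Sum.inr (e, 1), Sum.inr (e, 2)) ∨
        p = (Sum.inr (e, 3), Sum.inr (e, 2)) ∨
        p = (Sum.inr (e, 3), Sum.inr (e, 4)) ∨
        p = (Sum.inl (e.1, 0), Sum.inr (e, 0)) ∨
        p = (Sum.inl (e.2.1, 0), Sum.inr (e, 0)) ∨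
        p = (Sum.inr (e, 1), Sum.inl (e.2.2, 0))) := by
    intro p hp
    have := hNE hp
    rw [hEdef] at this
    simpa only [Finset.mem_union, Finset.mem_image, Finset.mem_biUnion, Finset.mem_insert,
      Finset.mem_singleton, eq_comm, or_assoc] using this
  -- membership of the various t-nodes in T
  have hTmem : ∀ t : GadgetNode V,
      ((∃ x ∈ X, t = Sum.inl (x, 1)) ∨ (∃ y ∈ Y, t = Sum.inl (y, 1)) ∨
       (∃ z ∈ Z, t = Sum.inl (z, 0)) ∨ (∃ e ∈ 𝓔, t = Sum.inr (e, 0)) ∨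
       (∃ e ∈ 𝓔, t = Sum.inr (e, 2)) ∨ (∃ e ∈ 𝓔, t = Sum.inr (e, 4))) → t ∈ T := by
    intro t ht
    rw [hT]
    simp only [Finset.mem_union, Finset.mem_image]
    rcases ht with ⟨x,hx,rfl⟩|⟨y,hy,rfl⟩|⟨z,hz,rfl⟩|⟨e,he,rfl⟩|⟨e,he,rfl⟩|⟨e,he,rfl⟩
    · exact Or.inl (Or.inl (Or.inl (Or.inl (Or.inl ⟨x,hx,rfl⟩))))
    · exact Or.inl (Or.inl (Or.inl (Or.inl (Or.inr ⟨y,hy,rfl⟩))))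
    · exact Or.inl (Or.inl (Or.inl (Or.inr ⟨z,hz,rfl⟩)))
    · exact Or.inl (Or.inl (Or.inr ⟨e,he,rfl⟩))
    · exact Or.inl (Or.inr ⟨e,he,rfl⟩)
    · exact Or.inr ⟨e,he,rfl⟩
  -- forced: the pendant edges at t_x
  have huniqX : ∀ x ∈ X, ∀ p ∈ N, (p.1 = (Sum.inl (x,1) : GadgetNode V) ∨ p.2 = Sum.inl (x,1)) →
      p = ((Sum.inl (x,0) : GadgetNode V), (Sum.inl (x,1) : GadgetNode V)) := by
    intro x hx p hp ht
    rcases hmemE p hp with ⟨x',hx',rfl⟩|⟨y',hy',rfl⟩|⟨e,he,hc⟩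
    · simp at ht; subst ht; rfl
    · simp at ht; subst ht
      exact absurd hy' (Finset.disjoint_left.mp hXY hx)
    · rcases hc with rfl|rfl|rfl|rfl|rfl|rfl|rfl <;> simp at ht
  have hsx : ∀ x ∈ X, ((Sum.inl (x,0) : GadgetNode V), (Sum.inl (x,1) : GadgetNode V)) ∈ N := by
    intro x hx
    obtain ⟨p, hp, hpt⟩ := hcov _ (hTmem _ (Or.inl ⟨x, hx, rfl⟩))
    have := huniqX x hx p hp hpt
    rwa [this] at hp
  have hdtx : ∀ x ∈ X, bipDeg N (Sum.inl (x,1) : GadgetNode V) = 1 := by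
    intro x hx
    exact deg_eq_one N _ _ (hsx x hx) (Or.inr rfl) (huniqX x hx)
  have huniqY : ∀ y ∈ Y, ∀ p ∈ N, (p.1 = (Sum.inl (y,1) : GadgetNode V) ∨ p.2 = Sum.inl (y,1)) →
      p = ((Sum.inl (y,0) : GadgetNode V), (Sum.inl (y,1) : GadgetNode V)) := by
    intro y hy p hp ht
    rcases hmemE p hp with ⟨x',hx',rfl⟩|⟨y',hy',rfl⟩|⟨e,he,hc⟩
    · simp at ht; subst ht
      exact absurd hy (Finset.disjoint_left.mp hXY hx')
    · simp at ht; subst ht; rfl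
    · rcases hc with rfl|rfl|rfl|rfl|rfl|rfl|rfl <;> simp at ht
  have hsy : ∀ y ∈ Y, ((Sum.inl (y,0) : GadgetNode V), (Sum.inl (y,1) : GadgetNode V)) ∈ N := by
    intro y hy
    obtain ⟨p, hp, hpt⟩ := hcov _ (hTmem _ (Or.inr (Or.inl ⟨y, hy, rfl⟩)))
    have := huniqY y hy p hp hpt
    rwa [this] at hp
  have hdty : ∀ y ∈ Y, bipDeg N (Sum.inl (y,1) : GadgetNode V) = 1 := by
    intro y hy
    exact deg_eq_one N _ _ (hsy y hy) (Or.inr rfl) (huniqY y hy)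
  -- forced: the pendant edges at t₃ᵉ
  have huniq4 : ∀ e : V × V × V, ∀ p ∈ N, (p.1 = (Sum.inr (e,4) : GadgetNode V) ∨ p.2 = Sum.inr (e,4)) →
      p = ((Sum.inr (e,3) : GadgetNode V), (Sum.inr (e,4) : GadgetNode V)) := by
    intro e p hp ht
    rcases hmemE p hp with ⟨x',hx',rfl⟩|⟨y',hy',rfl⟩|⟨e',he',hc⟩
    · simp at ht
    · simp at ht
    · rcases hc with rfl|rfl|rfl|rfl|rfl|rfl|rfl
      · simp at ht
      · simp at ht
      · simp at ht
      · simp at ht; subst ht; rfl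
      · simp at ht
      · simp at ht
      · simp at ht
  have h34 : ∀ e ∈ 𝓔, ((Sum.inr (e,3) : GadgetNode V), (Sum.inr (e,4) : GadgetNode V)) ∈ N := by
    intro e he
    obtain ⟨p, hp, hpt⟩ := hcov _ (hTmem _ (Or.inr (Or.inr (Or.inr (Or.inr (Or.inr ⟨e, he, rfl⟩))))))
    have := huniq4 e p hp hpt
    rwa [this] at hp
  have hd4 : ∀ e ∈ 𝓔, bipDeg N (Sum.inr (e,4) : GadgetNode V) = 1 := by
    intro e he
    exact deg_eq_one N _ _ (h34 e he) (Or.inr rfl) (huniq4 e)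
  -- forced: s₁ᵉ t₂ᵉ ∈ N for every e
  have huniq2 : ∀ e : V × V × V, ∀ p ∈ N, (p.1 = (Sum.inr (e,2) : GadgetNode V) ∨ p.2 = Sum.inr (e,2)) →
      p = ((Sum.inr (e,1) : GadgetNode V), (Sum.inr (e,2) : GadgetNode V)) ∨
      p = ((Sum.inr (e,3) : GadgetNode V), (Sum.inr (e,2) : GadgetNode V)) := by
    intro e p hp ht
    rcases hmemE p hp with ⟨x',hx',rfl⟩|⟨y',hy',rfl⟩|⟨e',he',hc⟩
    · simp at ht
    · simp at ht
    · rcases hc with rfl|rfl|rfl|rfl|rfl|rfl|rfl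
      · simp at ht
      · simp at ht; subst ht; left; rfl
      · simp at ht; subst ht; right; rfl
      · simp at ht
      · simp at ht
      · simp at ht
      · simp at ht
  have h12 : ∀ e ∈ 𝓔, ((Sum.inr (e,1) : GadgetNode V), (Sum.inr (e,2) : GadgetNode V)) ∈ N := by
    intro e he
    obtain ⟨p, hp, hpt⟩ := hcov _ (hTmem _ (Or.inr (Or.inr (Or.inr (Or.inr (Or.inl ⟨e, he, rfl⟩))))))
    rcases huniq2 e p hp hpt with rfl | rfl
    · exact hp
    · -- (e,3)-(e,2) ∈ N; use V-freeness
      have hd32 : bipDeg N (Sum.inr (e,3) : GadgetNode V) = 2 := by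
        have hge := deg_ge_two N (Sum.inr (e,3) : GadgetNode V)
          ((Sum.inr (e,3) : GadgetNode V), (Sum.inr (e,2) : GadgetNode V))
          ((Sum.inr (e,3) : GadgetNode V), (Sum.inr (e,4) : GadgetNode V))
          hp (h34 e he) (by simp) (Or.inl rfl) (Or.inl rfl)
        have hle := hdeg (Sum.inr (e,3) : GadgetNode V)
        omega
      have hne2 : bipDeg N (Sum.inr (e,2) : GadgetNode V) ≠ 1 := by
        intro h1
        exact hvf ⟨Sum.inr (e,3), Sum.inr (e,2), Sum.inr (e,4), by simp, hp, h34 e he,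
          hd32, h1, hd4 e he⟩
      have hge1 : 1 ≤ bipDeg N (Sum.inr (e,2) : GadgetNode V) :=
        deg_ge_one N _ _ hp (Or.inr rfl)
      have hle := hdeg (Sum.inr (e,2) : GadgetNode V)
      have hd2 : bipDeg N (Sum.inr (e,2) : GadgetNode V) = 2 := by omega
      exact (pair_of_deg_two N _ _ _ (huniq2 e) (by simp) hd2).1
  -- the selected hyperedges
  set 𝓜 : Finset (V × V × V) :=
    𝓔.filter (fun e => ((Sum.inr (e,1) : GadgetNode V), (Sum.inl (e.2.2,0) : GadgetNode V)) ∈ N)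
    with h𝓜def
  have h𝓜sub : 𝓜 ⊆ 𝓔 := Finset.filter_subset _ _
  have h𝓜mem : ∀ e, e ∈ 𝓜 ↔ e ∈ 𝓔 ∧
      ((Sum.inr (e,1) : GadgetNode V), (Sum.inl (e.2.2,0) : GadgetNode V)) ∈ N := by
    intro e; rw [h𝓜def, Finset.mem_filter]
  -- every z is hit by a selected hyperedge
  have hzsel : ∀ z ∈ Z, ∃ e ∈ 𝓜, e.2.2 = z := by
    intro z hz
    obtain ⟨p, hp, hpt⟩ := hcov _ (hTmem _ (Or.inr (Or.inr (Or.inl ⟨z, hz, rfl⟩))))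
    rcases hmemE p hp with ⟨x',hx',rfl⟩|⟨y',hy',rfl⟩|⟨e',he',hc⟩
    · simp at hpt; subst hpt
      exact absurd hz (Finset.disjoint_left.mp hXZ hx')
    · simp at hpt; subst hpt
      exact absurd hz (Finset.disjoint_left.mp hYZ hy')
    · rcases hc with rfl|rfl|rfl|rfl|rfl|rfl|rfl
      · simp at hpt
      · simp at hpt
      · simp at hpt
      · simp at hpt
      · simp at hpt
        exact absurd hz (Finset.disjoint_left.mp hXZ (hpt ▸ memX e' he'))
      · simp at hpt
        exact absurd hz (Finset.disjoint_left.mp hYZ (hpt ▸ memY e' he'))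
      · simp at hpt
        refine ⟨e', (h𝓜mem e').mpr ⟨he', ?_⟩, hpt⟩
        exact hp
  -- selected e: s₁ᵉ is saturated, so the t₁ᵉ-s₁ᵉ edge is absent
  have hno10 : ∀ e ∈ 𝓜, ((Sum.inr (e,1) : GadgetNode V), (Sum.inr (e,0) : GadgetNode V)) ∉ N := by
    intro e he h10
    obtain ⟨he𝓔, hz⟩ := (h𝓜mem e).mp he
    exact three_touch_absurd N (Sum.inr (e,1) : GadgetNode V)
      ((Sum.inr (e,1) : GadgetNode V), (Sum.inr (e,0) : GadgetNode V))
      ((Sum.inr (e,1) : GadgetNode V), (Sum.inr (e,2) : GadgetNode V))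
      ((Sum.inr (e,1) : GadgetNode V), (Sum.inl (e.2.2,0) : GadgetNode V))
      h10 (h12 e he𝓔) hz (by simp) (by simp) (by simp)
      (Or.inl rfl) (Or.inl rfl) (Or.inl rfl) (hdeg _)
  -- selected e: both s_x t₁ᵉ and s_y t₁ᵉ are present
  have huniq0 : ∀ e ∈ 𝓔, ∀ p ∈ N, (p.1 = (Sum.inr (e,0) : GadgetNode V) ∨ p.2 = Sum.inr (e,0)) →
      p = ((Sum.inr (e,1) : GadgetNode V), (Sum.inr (e,0) : GadgetNode V)) ∨
      p = ((Sum.inl (e.1,0) : GadgetNode V), (Sum.inr (e,0) : GadgetNode V)) ∨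
      p = ((Sum.inl (e.2.1,0) : GadgetNode V), (Sum.inr (e,0) : GadgetNode V)) := by
    intro e he p hp ht
    rcases hmemE p hp with ⟨x',hx',rfl⟩|⟨y',hy',rfl⟩|⟨e',he',hc⟩
    · simp at ht
    · simp at ht
    · rcases hc with rfl|rfl|rfl|rfl|rfl|rfl|rfl
      · simp at ht; subst ht; left; rfl
      · simp at ht
      · simp at ht
      · simp at ht
      · simp at ht; subst ht; right; left; rfl
      · simp at ht; subst ht; right; right; rfl
      · simp at ht
  have hxy : ∀ e ∈ 𝓜, ((Sum.inl (e.1,0) : GadgetNode V), (Sum.inr (e,0) : GadgetNode V)) ∈ N ∧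
      ((Sum.inl (e.2.1,0) : GadgetNode V), (Sum.inr (e,0) : GadgetNode V)) ∈ N := by
    intro e he
    obtain ⟨he𝓔, hz⟩ := (h𝓜mem e).mp he
    have hne_xy : e.1 ≠ e.2.1 := fun h =>
      Finset.disjoint_left.mp hXY (memX e he𝓔) (h ▸ memY e he𝓔)
    have huniq0' : ∀ p ∈ N, (p.1 = (Sum.inr (e,0) : GadgetNode V) ∨ p.2 = Sum.inr (e,0)) →
        p = ((Sum.inl (e.1,0) : GadgetNode V), (Sum.inr (e,0) : GadgetNode V)) ∨
        p = ((Sum.inl (e.2.1,0) : GadgetNode V), (Sum.inr (e,0) : GadgetNode V)) := by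
      intro p hp ht
      rcases huniq0 e he𝓔 p hp ht with rfl | h | h
      · exact absurd hp (hno10 e he)
      · exact Or.inl h
      · exact Or.inr h
    obtain ⟨p, hp, hpt⟩ := hcov _ (hTmem _ (Or.inr (Or.inr (Or.inr (Or.inl ⟨e, he𝓔, rfl⟩)))))
    have hdeg0 : bipDeg N (Sum.inr (e,0) : GadgetNode V) = 2 := by
      rcases huniq0' p hp hpt with rfl | rfl
      · -- s_x edge present
        have hdsx : bipDeg N (Sum.inl (e.1,0) : GadgetNode V) = 2 := by
          have hge := deg_ge_two N (Sum.inl (e.1,0) : GadgetNode V)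
            ((Sum.inl (e.1,0) : GadgetNode V), (Sum.inl (e.1,1) : GadgetNode V))
            ((Sum.inl (e.1,0) : GadgetNode V), (Sum.inr (e,0) : GadgetNode V))
            (hsx _ (memX e he𝓔)) hp (by simp) (Or.inl rfl) (Or.inl rfl)
          have hle := hdeg (Sum.inl (e.1,0) : GadgetNode V)
          omega
        have hne2 : bipDeg N (Sum.inr (e,0) : GadgetNode V) ≠ 1 := by
          intro h1
          exact hvf ⟨Sum.inl (e.1,0), Sum.inl (e.1,1), Sum.inr (e,0), by simp,
            hsx _ (memX e he𝓔), hp, hdsx, hdtx _ (memX e he𝓔), h1⟩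
        have hge1 : 1 ≤ bipDeg N (Sum.inr (e,0) : GadgetNode V) :=
          deg_ge_one N _ _ hp (Or.inr rfl)
        have hle := hdeg (Sum.inr (e,0) : GadgetNode V)
        omega
      · -- s_y edge present
        have hdsy : bipDeg N (Sum.inl (e.2.1,0) : GadgetNode V) = 2 := by
          have hge := deg_ge_two N (Sum.inl (e.2.1,0) : GadgetNode V)
            ((Sum.inl (e.2.1,0) : GadgetNode V), (Sum.inl (e.2.1,1) : GadgetNode V))
            ((Sum.inl (e.2.1,0) : GadgetNode V), (Sum.inr (e,0) : GadgetNode V))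
            (hsy _ (memY e he𝓔)) hp (by simp) (Or.inl rfl) (Or.inl rfl)
          have hle := hdeg (Sum.inl (e.2.1,0) : GadgetNode V)
          omega
        have hne2 : bipDeg N (Sum.inr (e,0) : GadgetNode V) ≠ 1 := by
          intro h1
          exact hvf ⟨Sum.inl (e.2.1,0), Sum.inl (e.2.1,1), Sum.inr (e,0), by simp,
            hsy _ (memY e he𝓔), hp, hdsy, hdty _ (memY e he𝓔), h1⟩
        have hge1 : 1 ≤ bipDeg N (Sum.inr (e,0) : GadgetNode V) :=
          deg_ge_one N _ _ hp (Or.inr rfl)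
        have hle := hdeg (Sum.inr (e,0) : GadgetNode V)
        omega
    exact pair_of_deg_two N _ _ _ huniq0' (by simp [hne_xy]) hdeg0
  -- injectivity of the x- and y-coordinates on 𝓜
  have hinjX : ∀ e ∈ 𝓜, ∀ e' ∈ 𝓜, e.1 = e'.1 → e = e' := by
    intro e he e' he' hxx
    by_contra hne
    have h1 := (hxy e he).1
    have h2 := (hxy e' he').1
    rw [← hxx] at h2
    exact three_touch_absurd N (Sum.inl (e.1,0) : GadgetNode V)
      ((Sum.inl (e.1,0) : GadgetNode V), (Sum.inl (e.1,1) : GadgetNode V))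
      ((Sum.inl (e.1,0) : GadgetNode V), (Sum.inr (e,0) : GadgetNode V))
      ((Sum.inl (e.1,0) : GadgetNode V), (Sum.inr (e',0) : GadgetNode V))
      (hsx _ (memX e (h𝓜sub he))) h1 h2
      (by simp) (by simp) (by simp [hne])
      (Or.inl rfl) (Or.inl rfl) (Or.inl rfl) (hdeg _)
  have hinjY : ∀ e ∈ 𝓜, ∀ e' ∈ 𝓜, e.2.1 = e'.2.1 → e = e' := by
    intro e he e' he' hyy
    by_contra hne
    have h1 := (hxy e he).2
    have h2 := (hxy e' he').2
    rw [← hyy] at h2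
    exact three_touch_absurd N (Sum.inl (e.2.1,0) : GadgetNode V)
      ((Sum.inl (e.2.1,0) : GadgetNode V), (Sum.inl (e.2.1,1) : GadgetNode V))
      ((Sum.inl (e.2.1,0) : GadgetNode V), (Sum.inr (e,0) : GadgetNode V))
      ((Sum.inl (e.2.1,0) : GadgetNode V), (Sum.inr (e',0) : GadgetNode V))
      (hsy _ (memY e (h𝓜sub he))) h1 h2
      (by simp) (by simp) (by simp [hne])
      (Or.inl rfl) (Or.inl rfl) (Or.inl rfl) (hdeg _)
  -- counting
  have hcard𝓔X : 𝓔.card = 3 * X.card := by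
    rw [Finset.card_eq_sum_card_fiberwise (f := fun e : V × V × V => e.1) (t := X) (fun e he => memX e he)]
    rw [Finset.sum_congr rfl (fun x hx => hregX x hx), Finset.sum_const, smul_eq_mul, mul_comm]
  have hcard𝓔Y : 𝓔.card = 3 * Y.card := by
    rw [Finset.card_eq_sum_card_fiberwise (f := fun e : V × V × V => e.2.1) (t := Y) (fun e he => memY e he)]
    rw [Finset.sum_congr rfl (fun y hy => hregY y hy), Finset.sum_const, smul_eq_mul, mul_comm]
  have hcard𝓔Z : 𝓔.card = 3 * Z.card := by
    rw [Finset.card_eq_sum_card_fiberwise (f := fun e : V × V × V => e.2.2) (t := Z) (fun e he => memZ e he)]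
    rw [Finset.sum_congr rfl (fun z hz => hregZ z hz), Finset.sum_const, smul_eq_mul, mul_comm]
  have hXZcard : X.card = Z.card := by omega
  have hXYcard : X.card = Y.card := by omega
  have himgX : 𝓜.image (fun e => e.1) ⊆ X := by
    intro x hx
    simp only [Finset.mem_image] at hx
    obtain ⟨e, he, rfl⟩ := hx
    exact memX e (h𝓜sub he)
  have himgXcard : (𝓜.image (fun e => e.1)).card = 𝓜.card :=
    Finset.card_image_of_injOn (fun e he e' he' h => hinjX e he e' he' h)
  have h𝓜leX : 𝓜.card ≤ X.card := by
    rw [← himgXcard]; exact Finset.card_le_card himgX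
  have hZimg : Z ⊆ 𝓜.image (fun e => e.2.2) := by
    intro z hz
    obtain ⟨e, he, hez⟩ := hzsel z hz
    exact Finset.mem_image.mpr ⟨e, he, hez⟩
  have himgZ : 𝓜.image (fun e => e.2.2) ⊆ Z := by
    intro z hz
    simp only [Finset.mem_image] at hz
    obtain ⟨e, he, rfl⟩ := hz
    exact memZ e (h𝓜sub he)
  have hZle : Z.card ≤ 𝓜.card :=
    le_trans (Finset.card_le_card hZimg) (Finset.card_image_le)
  have h𝓜card : 𝓜.card = X.card := by omega
  have himgZcard : (𝓜.image (fun e => e.2.2)).card = 𝓜.card := by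
    have h1 : (𝓜.image (fun e => e.2.2)).card ≤ 𝓜.card := Finset.card_image_le
    have h2 : Z.card ≤ (𝓜.image (fun e => e.2.2)).card := Finset.card_le_card hZimg
    omega
  have hinjZ : ∀ e ∈ 𝓜, ∀ e' ∈ 𝓜, e.2.2 = e'.2.2 → e = e' := by
    have := Finset.card_image_iff.mp himgZcard
    intro e he e' he' h
    exact this he he' h
  have hXeq : 𝓜.image (fun e => e.1) = X :=
    Finset.eq_of_subset_of_card_le himgX (by omega)
  have himgY : 𝓜.image (fun e => e.2.1) ⊆ Y := by
    intro y hy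
    simp only [Finset.mem_image] at hy
    obtain ⟨e, he, rfl⟩ := hy
    exact memY e (h𝓜sub he)
  have himgYcard : (𝓜.image (fun e => e.2.1)).card = 𝓜.card :=
    Finset.card_image_of_injOn (fun e he e' he' h => hinjY e he e' he' h)
  have hYeq : 𝓜.image (fun e => e.2.1) = Y :=
    Finset.eq_of_subset_of_card_le himgY (by omega)
  refine ⟨𝓜, h𝓜sub, ?_, ?_, ?_, ?_⟩
  · intro m hm m' hm' hne
    refine ⟨fun h => hne (hinjX m hm m' hm' h), fun h => hne (hinjY m hm m' hm' h),
      fun h => hne (hinjZ m hm m' hm' h)⟩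
  · intro x hx
    rw [← hXeq] at hx
    simp only [Finset.mem_image] at hx
    obtain ⟨e, he, rfl⟩ := hx
    exact ⟨e, he, rfl⟩
  · intro y hy
    rw [← hYeq] at hy
    simp only [Finset.mem_image] at hy
    obtain ⟨e, he, rfl⟩ := hy
    exact ⟨e, he, rfl⟩
  · exact hzsel

end Backward

/-- Correctness of the gadget reduction: a tripartite 3-regular 3-uniform hypergraph
`H = (X,Y,Z;𝓔)` has a perfect matching iff the constructed bipartite graph
`G = (S,T;E)` has a `𝚅`-free 2-matching covering `T`. -/
theorem gadget_reduction_correct {V : Type*} [DecidableEq V] [Fintype V]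
    (X Y Z : Finset V) (hXY : Disjoint X Y) (hXZ : Disjoint X Z) (hYZ : Disjoint Y Z)
    (𝓔 : Finset (V × V × V)) (h𝓔 : 𝓔 ⊆ X ×ˢ Y ×ˢ Z)
    (hregX : ∀ x ∈ X, (𝓔.filter (fun e => e.1 = x)).card = 3)
    (hregY : ∀ y ∈ Y, (𝓔.filter (fun e => e.2.1 = y)).card = 3)
    (hregZ : ∀ z ∈ Z, (𝓔.filter (fun e => e.2.2 = z)).card = 3)
    (T : Finset (GadgetNode V))
    (hT : T = X.image (fun x => Sum.inl (x, (1 : Fin 2))) ∪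
              Y.image (fun y => Sum.inl (y, (1 : Fin 2))) ∪
              Z.image (fun z => Sum.inl (z, (0 : Fin 2))) ∪
              𝓔.image (fun e => Sum.inr (e, (0 : Fin 5))) ∪
              𝓔.image (fun e => Sum.inr (e, (2 : Fin 5))) ∪
              𝓔.image (fun e => Sum.inr (e, (4 : Fin 5))))
    (E : Finset (GadgetNode V × GadgetNode V))
    (hEdef : E =
      X.image (fun x => ((Sum.inl (x, 0) : GadgetNode V), (Sum.inl (x, 1) : GadgetNode V))) ∪
      Y.image (fun y => ((Sum.inl (y, 0) : GadgetNode V), (Sum.inl (y, 1) : GadgetNode V))) ∪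
      𝓔.biUnion (fun e =>
        { ((Sum.inr (e, 1) : GadgetNode V), (Sum.inr (e, 0) : GadgetNode V)),
          (Sum.inr (e, 1), Sum.inr (e, 2)),
          (Sum.inr (e, 3), Sum.inr (e, 2)),
          (Sum.inr (e, 3), Sum.inr (e, 4)),
          (Sum.inl (e.1, 0), Sum.inr (e, 0)),
          (Sum.inl (e.2.1, 0), Sum.inr (e, 0)),
          (Sum.inr (e, 1), Sum.inl (e.2.2, 0)) })) :
    (∃ 𝓜 ⊆ 𝓔,
        (∀ m ∈ 𝓜, ∀ m' ∈ 𝓜, m ≠ m' →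
          m.1 ≠ m'.1 ∧ m.2.1 ≠ m'.2.1 ∧ m.2.2 ≠ m'.2.2) ∧
        (∀ x ∈ X, ∃ m ∈ 𝓜, m.1 = x) ∧ (∀ y ∈ Y, ∃ m ∈ 𝓜, m.2.1 = y) ∧
        (∀ z ∈ Z, ∃ m ∈ 𝓜, m.2.2 = z)) ↔
    (∃ N : Finset (GadgetNode V × GadgetNode V),
        Is2Matching E N ∧ VFree N ∧ ∀ t ∈ T, Covers N t) := by
  
  constructor
  · rintro ⟨𝓜, hsub, hmatch, covX, covY, covZ⟩
    exact gadget_forward X Y Z hXY hXZ hYZ 𝓔 h𝓔 T hT E hEdef 𝓜 hsub hmatch covX covY covZ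
  · rintro ⟨N, ⟨hNE, hdeg⟩, hvf, hcov⟩
    exact gadget_backward X Y Z hXY hXZ hYZ 𝓔 h𝓔 hregX hregY hregZ T hT E hEdef N hNE hdeg hvf hcov
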